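/- arXiv:2302.02895 — 2 statements merged into one kernel-verified Lean document; each statement's English description precedes it below -/
import Mathlib

section
/- Let G be a finite connected graph on V, f, g : V → ℝ, and p a balanced probability distribution on V. With W_f and W_g the minimax path matrices of f and g, for every v, w ∈ V there exists a vertex u ∈ V such that |W_f(v,w) − W_g(v,w)| · (p(v)·p(w))^{1/q} ≤ |f(u) − g(u)| · p(u)^{1/q}. -/
open Finset

/-- The maximum value of `f` along the support of a walk. -/
def walkMax {V : Type*} (G : SimpleGraph V) (f : V → ℝ) {v w : V}
    (p : G.Walk v w) : ℝ :=
  p.support.foldr (fun u r => max (f u) r) (f v)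

/-- The minimax path matrix `W_f(v,w)`: the minimum over edge paths from `v`
to `w` of the maximum `f`-value along the path. -/
noncomputable def minimaxW {V : Type*} (G : SimpleGraph V) (f : V → ℝ)
    (v w : V) : ℝ :=
  sInf {x | ∃ p : G.Walk v w, x = walkMax G f p}

private lemma le_foldrMax {V : Type*} (f : V → ℝ) (a : ℝ) (l : List V) :
    a ≤ l.foldr (fun u r => max (f u) r) a := by
  induction l with
  | nil => exact le_rfl
  | cons x l ih => exact ih.trans (le_max_right _ _)

private lemma mem_le_foldrMax {V : Type*} (f : V → ℝ) (a : ℝ) (l : List V)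
    {u : V} (hu : u ∈ l) : f u ≤ l.foldr (fun u r => max (f u) r) a := by
  induction l with
  | nil => simp at hu
  | cons x l ih =>
    rcases List.mem_cons.mp hu with h | h
    · subst h; exact le_max_left _ _
    · exact (ih h).trans (le_max_right _ _)

private lemma foldrMax_eq {V : Type*} (f : V → ℝ) (a : ℝ) (l : List V) :
    l.foldr (fun u r => max (f u) r) a = a ∨
      ∃ u ∈ l, l.foldr (fun u r => max (f u) r) a = f u := by
  induction l with
  | nil => exact Or.inl rfl
  | cons x l ih =>
    rcases le_total (f x) (l.foldr (fun u r => max (f u) r) a) with h | h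
    · simp only [List.foldr_cons, max_eq_right h]
      rcases ih with h' | ⟨u, hu, h'⟩
      · exact Or.inl h'
      · exact Or.inr ⟨u, List.mem_cons_of_mem _ hu, h'⟩
    · simp only [List.foldr_cons, max_eq_left h]
      exact Or.inr ⟨x, List.mem_cons_self, rfl⟩

private lemma walkMax_eq {V : Type*} (G : SimpleGraph V) (f g : V → ℝ) {v w : V}
    (P : G.Walk v w) : ∃ u : V, walkMax G f P = f u ∧ g u ≤ walkMax G g P := by
  rcases foldrMax_eq f (f v) P.support with h | ⟨u, hu, h⟩
  · exact ⟨v, h, le_foldrMax g (g v) P.support⟩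
  · exact ⟨u, h, mem_le_foldrMax g (g v) P.support hu⟩

private lemma minimaxW_attained {V : Type*} [Fintype V] (G : SimpleGraph V)
    (hG : G.Connected) (f : V → ℝ) (v w : V) :
    (∃ P : G.Walk v w, minimaxW G f v w = walkMax G f P) ∧
      ∀ Q : G.Walk v w, minimaxW G f v w ≤ walkMax G f Q := by
  set S : Set ℝ := {x | ∃ p : G.Walk v w, x = walkMax G f p} with hS
  have hsub : S ⊆ Set.range f := by
    rintro x ⟨P, rfl⟩
    obtain ⟨u, hu, -⟩ := walkMax_eq G f f P
    exact ⟨u, hu.symm⟩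
  have hfin : S.Finite := (Set.finite_range f).subset hsub
  obtain ⟨P⟩ := hG.preconnected v w
  have hne : S.Nonempty := ⟨walkMax G f P, P, rfl⟩
  constructor
  · exact hne.csInf_mem hfin
  · intro Q
    exact csInf_le hfin.bddBelow ⟨Q, rfl⟩

private lemma half {V : Type*} [Fintype V] (G : SimpleGraph V)
    (hG : G.Connected) (f g : V → ℝ) (v w : V) :
    ∃ u : V, minimaxW G f v w - minimaxW G g v w ≤ |f u - g u| := by
  obtain ⟨⟨P, hP⟩, -⟩ := minimaxW_attained G hG g v w
  obtain ⟨-, hle⟩ := minimaxW_attained G hG f v w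
  obtain ⟨u, hu1, hu2⟩ := walkMax_eq G f g P
  refine ⟨u, le_trans ?_ (le_abs_self _)⟩
  have h1 : minimaxW G f v w ≤ f u := hu1 ▸ hle P
  have h2 : g u ≤ minimaxW G g v w := hP ▸ hu2
  linarith

/-- for a balanced probability distribution `p`, the weighted
difference of minimax matrices is dominated at some vertex `u`. -/
theorem minimaxW_weighted_pointwise_bound {V : Type*} [Fintype V] [Nonempty V]
    (G : SimpleGraph V) (hG : G.Connected) (f g : V → ℝ) (q : ℝ) (hq : 1 ≤ q)
    (p : V → ℝ) (hp : ∀ v, 0 ≤ p v) (hsum : ∑ v, p v = 1)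
    (hbal : ∀ a b c : V, p a * p b ≤ p c) :
    ∀ v w : V, ∃ u : V,
      |minimaxW G f v w - minimaxW G g v w| * (p v * p w) ^ (1 / q) ≤
        |f u - g u| * p u ^ (1 / q) := by
  intro v w
  have habs : ∃ u : V, |minimaxW G f v w - minimaxW G g v w| ≤ |f u - g u| := by
    rcases le_total (minimaxW G g v w) (minimaxW G f v w) with h | h
    · obtain ⟨u, hu⟩ := half G hG f g v w
      exact ⟨u, by rwa [abs_of_nonneg (by linarith)]⟩
    · obtain ⟨u, hu⟩ := half G hG g f v w
      refine ⟨u, ?_⟩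
      rw [abs_sub_comm, abs_of_nonneg (by linarith), abs_sub_comm]
      exact hu
  obtain ⟨u, hu⟩ := habs
  refine ⟨u, mul_le_mul hu ?_ (Real.rpow_nonneg (mul_nonneg (hp v) (hp w)) _)
    (abs_nonneg _)⟩
  exact Real.rpow_le_rpow (mul_nonneg (hp v) (hp w)) (hbal v w u)
    (div_nonneg zero_le_one (zero_le_one.trans hq))
end

section
/- Let G be a finite connected graph on a vertex set V of cardinality n, let f, g : V → ℝ, and let p be a balanced probability distribution on V. Then the weighted L^q distance between the minimax path matrices satisfies (∑_{v,w} |W_f(v,w) − W_g(v,w)|^q p(v)p(w))^{1/q} ≤ n^{2/q} · (∑_u |f(u) − g(u)|^q p(u))^{1/q}. -/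
open Finset

private lemma foldr_max_le_aux {V : Type*} (f g : V → ℝ) (M : ℝ)
    (h : ∀ u, f u ≤ g u + M) (l : List V) (a b : ℝ) (hab : a ≤ b + M) :
    l.foldr (fun u r => max (f u) r) a ≤ l.foldr (fun u r => max (g u) r) b + M := by
  induction l with
  | nil => simpa using hab
  | cons x xs ih =>
    simp only [List.foldr_cons]
    rw [← max_add_add_right]
    exact max_le_max (h x) ih

private lemma le_foldr_max {V : Type*} (g : V → ℝ) (l : List V) (a : ℝ) :
    a ≤ l.foldr (fun u r => max (g u) r) a := by
  induction l with
  | nil => simp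
  | cons x xs ih => exact le_trans ih (le_max_right _ _)

private lemma minimaxW_le_add {V : Type*} (G : SimpleGraph V) (hG : G.Connected)
    (f g : V → ℝ) (M : ℝ) (hM : ∀ u, f u ≤ g u + M) (hM' : ∀ u, g u + M ≤ g u + M)
    (v w : V) : minimaxW G f v w ≤ minimaxW G g v w + M := by
  obtain ⟨p0⟩ := hG v w
  have hbdd : BddBelow {x | ∃ p : G.Walk v w, x = walkMax G f p} := by
    refine ⟨f v, ?_⟩
    rintro x ⟨p, rfl⟩
    exact le_foldr_max f p.support (f v)
  rw [minimaxW, minimaxW, ← sub_le_iff_le_add]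
  refine le_csInf ⟨walkMax G g p0, p0, rfl⟩ ?_
  rintro b ⟨p, rfl⟩
  rw [sub_le_iff_le_add]
  refine le_trans (csInf_le hbdd ⟨p, rfl⟩) ?_
  exact foldr_max_le_aux f g M hM p.support (f v) (g v) (hM v)

private lemma abs_minimaxW_sub_le {V : Type*} (G : SimpleGraph V) (hG : G.Connected)
    (f g : V → ℝ) (M : ℝ) (hM : ∀ u, |f u - g u| ≤ M) (v w : V) :
    |minimaxW G f v w - minimaxW G g v w| ≤ M := by
  rw [abs_sub_le_iff]
  constructor
  · rw [sub_le_iff_le_add, add_comm]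
    refine minimaxW_le_add G hG f g M (fun u => ?_) (fun u => le_rfl) v w
    have := (abs_le.mp (hM u)).2
    linarith
  · rw [sub_le_iff_le_add, add_comm]
    refine minimaxW_le_add G hG g f M (fun u => ?_) (fun u => le_rfl) v w
    have := (abs_le.mp (hM u)).1
    linarith

/-- GW-type stability bound for balanced distributions with
constant `n^{2/q}`. -/
theorem minimaxW_Lq_stability_balanced {V : Type*} [Fintype V] [Nonempty V]
    (G : SimpleGraph V) (hG : G.Connected) (f g : V → ℝ) (q : ℝ) (hq : 1 ≤ q)
    (p : V → ℝ) (hp : ∀ v, 0 ≤ p v) (hsum : ∑ v, p v = 1)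
    (hbal : ∀ a b c : V, p a * p b ≤ p c) :
    (∑ v, ∑ w, |minimaxW G f v w - minimaxW G g v w| ^ q * (p v * p w)) ^ (1 / q) ≤
      (Fintype.card V : ℝ) ^ ((2 : ℝ) / q) *
        (∑ u, |f u - g u| ^ q * p u) ^ (1 / q) := by
  have hq0 : 0 < q := lt_of_lt_of_le one_pos hq
  set n : ℝ := (Fintype.card V : ℝ) with hn
  have hn0 : 0 < n := by
    simp only [hn]
    exact_mod_cast Fintype.card_pos
  set M : ℝ := Finset.univ.sup' univ_nonempty (fun u => |f u - g u|) with hMdef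
  have hM0 : 0 ≤ M := le_trans (abs_nonneg _) (Finset.le_sup' (fun u => |f u - g u|) (mem_univ (Classical.arbitrary V)))
  obtain ⟨u0, -, hu0⟩ := Finset.exists_mem_eq_sup' univ_nonempty (fun u => |f u - g u|)
  -- p u0 ≥ 1/n^2
  have hexa : ∃ a ∈ Finset.univ, (1 : ℝ)/n ≤ p a := by
    by_contra hcon
    push_neg at hcon
    have : ∑ v : V, p v < ∑ v : V, (1:ℝ)/n :=
      Finset.sum_lt_sum_of_nonempty univ_nonempty (fun i _ => hcon i (mem_univ i))
    rw [hsum, Finset.sum_const, nsmul_eq_mul] at this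
    rw [hn] at this
    field_simp at this
    rw [Finset.card_univ] at this
    exact lt_irrefl _ this
  obtain ⟨a, -, ha⟩ := hexa
  have hpu0 : 1 / n ^ 2 ≤ p u0 := by
    have h1 : (1:ℝ)/n * (1/n) ≤ p a * p a := by
      apply mul_le_mul ha ha (by positivity) (hp a)
    calc 1 / n ^ 2 = 1/n * (1/n) := by ring
      _ ≤ p a * p a := h1
      _ ≤ p u0 := hbal a a u0
  set S : ℝ := ∑ u, |f u - g u| ^ q * p u with hS
  have hS0 : 0 ≤ S :=
    Finset.sum_nonneg fun u _ => mul_nonneg (Real.rpow_nonneg (abs_nonneg _) q) (hp u)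
  have hMqS : M ^ q ≤ n ^ 2 * S := by
    have h1 : M ^ q * (1 / n ^ 2) ≤ S := by
      calc M ^ q * (1 / n ^ 2) ≤ M ^ q * p u0 := by
            apply mul_le_mul_of_nonneg_left hpu0 (Real.rpow_nonneg hM0 q)
        _ = |f u0 - g u0| ^ q * p u0 := by rw [hMdef, hu0]
        _ ≤ S := by
            rw [hS]
            exact Finset.single_le_sum (f := fun u => |f u - g u| ^ q * p u)
              (fun u _ => mul_nonneg (Real.rpow_nonneg (abs_nonneg _) q) (hp u)) (mem_univ u0)
    have hn2 : (0:ℝ) < n ^ 2 := by positivity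
    calc M ^ q = M ^ q * (1 / n ^ 2) * n ^ 2 := by field_simp
      _ ≤ S * n ^ 2 := by apply mul_le_mul_of_nonneg_right h1 (le_of_lt hn2)
      _ = n ^ 2 * S := by ring
  have hLHS : (∑ v, ∑ w, |minimaxW G f v w - minimaxW G g v w| ^ q * (p v * p w)) ≤ M ^ q := by
    calc (∑ v, ∑ w, |minimaxW G f v w - minimaxW G g v w| ^ q * (p v * p w))
        ≤ ∑ v, ∑ w, M ^ q * (p v * p w) := by
          apply Finset.sum_le_sum
          intro v _
          apply Finset.sum_le_sum
          intro w _
          apply mul_le_mul_of_nonneg_right _ (mul_nonneg (hp v) (hp w))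
          apply Real.rpow_le_rpow (abs_nonneg _) _ (le_of_lt hq0)
          exact abs_minimaxW_sub_le G hG f g M
            (fun u => Finset.le_sup' (fun u => |f u - g u|) (mem_univ u)) v w
      _ = M ^ q := by
          simp only [← Finset.mul_sum, ← Finset.sum_mul]
          rw [hsum]; ring
  have hLnn : 0 ≤ ∑ v, ∑ w, |minimaxW G f v w - minimaxW G g v w| ^ q * (p v * p w) :=
    Finset.sum_nonneg fun v _ => Finset.sum_nonneg fun w _ =>
      mul_nonneg (Real.rpow_nonneg (abs_nonneg _) q) (mul_nonneg (hp v) (hp w))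
  have key : (∑ v, ∑ w, |minimaxW G f v w - minimaxW G g v w| ^ q * (p v * p w)) ^ (1/q)
      ≤ (n ^ 2 * S) ^ (1/q) :=
    Real.rpow_le_rpow hLnn (le_trans hLHS hMqS) (by positivity)
  refine le_trans key ?_
  rw [Real.mul_rpow (by positivity) hS0]
  apply mul_le_mul_of_nonneg_right _ (Real.rpow_nonneg hS0 _)
  rw [show (n:ℝ)^2 = n ^ (2:ℝ) by rw [← Real.rpow_natCast n 2]; norm_num,
    ← Real.rpow_mul (le_of_lt hn0)]
  rw [show (2:ℝ) * (1/q) = 2/q by ring]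
end
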